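/- If ψ ∈ N minimizes I over the Nehari manifold N, its Steiner symmetrization ψ* in the z-variable also belongs to N and I[ψ*] = I[ψ]. In particular there exists a Steiner-symmetric ground state. -/

import Mathlib

open Real MeasureTheory Set Filter

noncomputable section

/-- `∂_z` of a function of `(z,r)`. -/
def pz2 (f : ℝ × ℝ → ℝ) (x : ℝ × ℝ) : ℝ := fderiv ℝ f x (1, 0)

/-- `∂_r` of a function of `(z,r)`. -/
def pr2 (f : ℝ × ℝ → ℝ) (x : ℝ × ℝ) : ℝ := fderiv ℝ f x (0, 1)

/-- `|∇ψ|²` for a function of `(z,r)`. -/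
def gradsq (f : ℝ × ℝ → ℝ) (x : ℝ × ℝ) : ℝ := pz2 f x ^ 2 + pr2 f x ^ 2

/-- The half disk `D = {(z,r) : r > 0, z² + r² < R²}`. -/
def halfDisk (R : ℝ) : Set (ℝ × ℝ) := {x | 0 < x.2 ∧ x.1 ^ 2 + x.2 ^ 2 < R ^ 2}

/-- The squared norm of the weighted Sobolev space `H(D;r⁻¹)`:
`‖ψ‖² = 2π² ∫_D |∇ψ|² r⁻¹ dz dr`. -/
def Hnormsq (D : Set (ℝ × ℝ)) (ψ : ℝ × ℝ → ℝ) : ℝ :=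
  2 * π ^ 2 * ∫ x in D, gradsq ψ x / x.2

/-- `J[ψ] = (π²λ/q) ∫_D (ψ - r² - γ)₊^{2q} r⁻¹ dz dr`. -/
def Jfun (D : Set (ℝ × ℝ)) (q lam gam : ℝ) (ψ : ℝ × ℝ → ℝ) : ℝ :=
  (π ^ 2 * lam / q) * ∫ x in D, (max (ψ x - x.2 ^ 2 - gam) 0) ^ (2 * q) / x.2

/-- The functional `I[ψ] = ½‖ψ‖²_H - J[ψ]`. -/
def Ifun (D : Set (ℝ × ℝ)) (q lam gam : ℝ) (ψ : ℝ × ℝ → ℝ) : ℝ :=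
  Hnormsq D ψ / 2 - Jfun D q lam gam ψ

/-- `I'[ψ]φ = 2π² ∫_D ∇ψ·∇φ r⁻¹ - 2π²λ ∫_D (ψ - r² - γ)₊^{2q-1} φ r⁻¹`. -/
def Iprime (D : Set (ℝ × ℝ)) (q lam gam : ℝ) (ψ φ : ℝ × ℝ → ℝ) : ℝ :=
  2 * π ^ 2 * (∫ x in D, (pz2 ψ x * pz2 φ x + pr2 ψ x * pr2 φ x) / x.2)
    - 2 * π ^ 2 * lam * ∫ x in D, (max (ψ x - x.2 ^ 2 - gam) 0) ^ (2 * q - 1) * φ x / x.2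

/-- `I'[ψ]ψ = ‖ψ‖²_H - 2π²λ ∫_D (ψ - r² - γ)₊^{2q-1} ψ r⁻¹`. -/
def IprimeSelf (D : Set (ℝ × ℝ)) (q lam gam : ℝ) (ψ : ℝ × ℝ → ℝ) : ℝ :=
  Hnormsq D ψ - 2 * π ^ 2 * lam *
    ∫ x in D, (max (ψ x - x.2 ^ 2 - gam) 0) ^ (2 * q - 1) * ψ x / x.2

/-- Admissible (test) functions of the weighted Sobolev space `H(D;r⁻¹)`:
smooth, compactly supported in `D`. -/
def Adm (D : Set (ℝ × ℝ)) (ψ : ℝ × ℝ → ℝ) : Prop :=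
  ContDiff ℝ (⊤ : ℕ∞) ψ ∧ HasCompactSupport ψ ∧ tsupport ψ ⊆ D

section StmtAux

variable {R q lam gam : ℝ} {ψ ψs : ℝ × ℝ → ℝ}

lemma halfDisk_isOpen (R : ℝ) : IsOpen (halfDisk R) := by
  have h1 : IsOpen {x : ℝ × ℝ | 0 < x.2} := isOpen_lt continuous_const continuous_snd
  have h2 : IsOpen {x : ℝ × ℝ | x.1 ^ 2 + x.2 ^ 2 < R ^ 2} :=
    isOpen_lt (by fun_prop) continuous_const
  exact h1.inter h2

lemma measurableSet_halfDisk (R : ℝ) : MeasurableSet (halfDisk R) :=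
  (halfDisk_isOpen R).measurableSet

lemma measurableSet_slice (R r : ℝ) : MeasurableSet {z : ℝ | (z, r) ∈ halfDisk R} :=
  (measurableSet_halfDisk R).preimage (measurable_prodMk_right)

/-- layer cake for `(max (f z - c) 0)^p`. -/
lemma layer {p : ℝ} (hp : 0 < p) (c : ℝ) (f : ℝ → ℝ) (hf : Measurable f) (μ : Measure ℝ) :
    ∫⁻ z, ENNReal.ofReal ((max (f z - c) 0) ^ p) ∂μ
      = ENNReal.ofReal p *
        ∫⁻ t in Ioi (0:ℝ), μ {z | t ≤ max (f z - c) 0} * ENNReal.ofReal (t ^ (p-1)) := by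
  have key := lintegral_comp_eq_lintegral_meas_le_mul μ (f := fun z => max (f z - c) 0)
      (g := fun t => t ^ (p-1)) (Eventually.of_forall fun z => le_max_right _ _)
      ((hf.sub measurable_const).max measurable_const).aemeasurable
      (fun t _ => intervalIntegral.intervalIntegrable_rpow' (by linarith))
      (by
        filter_upwards [ae_restrict_mem measurableSet_Ioi] with t ht
        exact Real.rpow_nonneg (le_of_lt ht) _)
  have hin : ∀ z, (∫ t in (0:ℝ)..(max (f z - c) 0), t ^ (p-1)) = (max (f z - c) 0) ^ p / p := by
    intro z
    rw [integral_rpow (Or.inl (by linarith))]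
    rw [Real.zero_rpow (by linarith : p - 1 + 1 ≠ 0), sub_add_cancel]
    rw [sub_zero]
  simp only [hin] at key
  rw [← key, ← lintegral_const_mul' _ _ ENNReal.ofReal_ne_top]
  congr 1; funext z
  rw [← ENNReal.ofReal_mul hp.le, mul_div_cancel₀ _ (ne_of_gt hp)]

lemma slice_key {p c : ℝ} (hp : 0 < p) (hc : 0 < c) (f g : ℝ → ℝ)
    (hf : Measurable f) (hg : Measurable g) {S : Set ℝ} (hS : MeasurableSet S)
    (heq : ∀ t : ℝ, 0 < t → volume {z | z ∈ S ∧ t ≤ f z} = volume {z | z ∈ S ∧ t ≤ g z}) :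
    ∫⁻ z in S, ENNReal.ofReal ((max (f z - c) 0) ^ p) =
      ∫⁻ z in S, ENNReal.ofReal ((max (g z - c) 0) ^ p) := by
  rw [layer hp c f hf, layer hp c g hg]
  congr 1
  apply setLIntegral_congr_fun measurableSet_Ioi
  intro t ht
  have ht0 : 0 < t := mem_Ioi.1 ht
  have hkey : ∀ u : ℝ → ℝ, {z | t ≤ max (u z - c) 0} ∩ S = {z | z ∈ S ∧ t + c ≤ u z} := by
    intro u
    ext z
    simp only [mem_inter_iff, mem_setOf_eq, le_max_iff]
    constructor
    · rintro ⟨h | h, hz⟩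
      · exact ⟨hz, by linarith⟩
      · exact absurd h (not_le.2 ht0)
    · rintro ⟨hz, h⟩
      exact ⟨Or.inl (by linarith), hz⟩
  beta_reduce
  congr 1
  rw [Measure.restrict_apply' hS, Measure.restrict_apply' hS, hkey f, hkey g]
  exact heq (t + c) (by linarith)

lemma fubini_half (R : ℝ) (w : ℝ × ℝ → ENNReal) (hw : Measurable w) :
    ∫⁻ x in halfDisk R, w x =
      ∫⁻ r : ℝ, ∫⁻ z in {z : ℝ | (z, r) ∈ halfDisk R}, w (z, r) := by
  rw [← lintegral_indicator (measurableSet_halfDisk R)]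
  rw [show (volume : Measure (ℝ × ℝ)) = (volume : Measure ℝ).prod volume from Measure.volume_eq_prod ℝ ℝ]
  rw [lintegral_prod_symm _ (hw.indicator (measurableSet_halfDisk R)).aemeasurable]
  refine lintegral_congr fun r => ?_
  rw [← lintegral_indicator (measurableSet_slice R r)]
  refine lintegral_congr fun z => ?_
  by_cases h : (z, r) ∈ halfDisk R
  · rw [Set.indicator_of_mem h, Set.indicator_of_mem (a := z) h]
  · rw [Set.indicator_of_notMem h, Set.indicator_of_notMem (a := z) h]

lemma cont_max_rpow {gam p : ℝ} (hp : 0 < p) {φ : ℝ × ℝ → ℝ} (hφ : Continuous φ) :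
    Continuous fun x : ℝ × ℝ => (max (φ x - x.2 ^ 2 - gam) 0) ^ p := by
  have hu : Continuous fun x : ℝ × ℝ => max (φ x - x.2 ^ 2 - gam) 0 :=
    ((hφ.sub (continuous_snd.pow 2)).sub continuous_const).max continuous_const
  exact continuous_iff_continuousAt.2 fun x => hu.continuousAt.rpow_const (Or.inr hp.le)

lemma meas_qint {gam p : ℝ} (hp : 0 < p) {φ : ℝ × ℝ → ℝ} (hφ : Continuous φ) :
    Measurable fun x : ℝ × ℝ => (max (φ x - x.2 ^ 2 - gam) 0) ^ p / x.2 :=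
  (cont_max_rpow hp hφ).measurable.div measurable_snd

lemma meas_pint {gam p : ℝ} (hp : 0 < p) {φ : ℝ × ℝ → ℝ} (hφ : Continuous φ) :
    Measurable fun x : ℝ × ℝ => (max (φ x - x.2 ^ 2 - gam) 0) ^ p * φ x / x.2 :=
  ((cont_max_rpow hp hφ).measurable.mul hφ.measurable).div measurable_snd

lemma meas_cint {gam p : ℝ} (hp : 0 < p) {φ : ℝ × ℝ → ℝ} (hφ : Continuous φ) :
    Measurable fun x : ℝ × ℝ => (x.2 ^ 2 + gam) * (max (φ x - x.2 ^ 2 - gam) 0) ^ p / x.2 :=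
  ((measurable_snd.pow_const 2).add_const gam |>.mul
    (cont_max_rpow hp hφ).measurable).div measurable_snd

/-- plain lintegral equality -/
lemma LQ_eq (hgam : 0 < gam) {p : ℝ} (hp : 0 < p)
    (hψ : Continuous ψ) (hψs : Continuous ψs)
    (hequi : ∀ r t : ℝ, 0 < t →
      volume {z : ℝ | ((z, r) : ℝ × ℝ) ∈ halfDisk R ∧ t ≤ ψ (z, r)}
        = volume {z : ℝ | ((z, r) : ℝ × ℝ) ∈ halfDisk R ∧ t ≤ ψs (z, r)}) :
    ∫⁻ x in halfDisk R, ENNReal.ofReal ((max (ψ x - x.2 ^ 2 - gam) 0) ^ p / x.2)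
      = ∫⁻ x in halfDisk R, ENNReal.ofReal ((max (ψs x - x.2 ^ 2 - gam) 0) ^ p / x.2) := by
  rw [fubini_half R _ (meas_qint hp hψ).ennreal_ofReal,
      fubini_half R _ (meas_qint hp hψs).ennreal_ofReal]
  refine lintegral_congr fun r => ?_
  by_cases hr : 0 < r
  · have hstep : ∀ φ : ℝ × ℝ → ℝ, Continuous φ →
        ∫⁻ z in {z : ℝ | (z, r) ∈ halfDisk R},
            ENNReal.ofReal ((max (φ (z, r) - ((z, r) : ℝ × ℝ).2 ^ 2 - gam) 0) ^ p
              / ((z, r) : ℝ × ℝ).2)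
          = (∫⁻ z in {z : ℝ | (z, r) ∈ halfDisk R},
              ENNReal.ofReal ((max (φ (z, r) - (r ^ 2 + gam)) 0) ^ p)) * ENNReal.ofReal r⁻¹ := by
      intro φ hφ
      have hm : Measurable fun z : ℝ =>
          ENNReal.ofReal ((max (φ (z, r) - (r ^ 2 + gam)) 0) ^ p) := by
        have : Continuous fun z : ℝ => (max (φ (z, r) - (r ^ 2 + gam)) 0) ^ p := by
          have hu : Continuous fun z : ℝ => max (φ (z, r) - (r ^ 2 + gam)) 0 :=
            ((hφ.comp (Continuous.prodMk_left r)).sub continuous_const).max continuous_const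
          exact continuous_iff_continuousAt.2 fun z =>
            hu.continuousAt.rpow_const (Or.inr hp.le)
        exact this.measurable.ennreal_ofReal
      rw [← lintegral_mul_const _ hm]
      refine lintegral_congr fun z => ?_
      have h1 : (max (φ (z, r) - ((z, r) : ℝ × ℝ).2 ^ 2 - gam) 0) ^ p / ((z, r) : ℝ × ℝ).2
          = (max (φ (z, r) - (r ^ 2 + gam)) 0) ^ p * r⁻¹ := by
        show (max (φ (z, r) - r ^ 2 - gam) 0) ^ p / r = _
        rw [sub_sub, div_eq_mul_inv]
      rw [h1, ENNReal.ofReal_mul (Real.rpow_nonneg (le_max_right _ _) p)]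
    rw [hstep ψ hψ, hstep ψs hψs]
    congr 1
    exact slice_key hp (by positivity) _ _
      (hψ.comp (Continuous.prodMk_left r)).measurable
      (hψs.comp (Continuous.prodMk_left r)).measurable
      (measurableSet_slice R r)
      (fun t ht => hequi r (t) ht)
  · have hempty : {z : ℝ | (z, r) ∈ halfDisk R} = ∅ := by
      ext z; simp only [mem_setOf_eq, mem_empty_iff_false, iff_false]
      intro h; exact hr h.1
    rw [hempty]
    simp

/-- weighted lintegral equality -/
lemma LC_eq (hgam : 0 < gam) {p : ℝ} (hp : 0 < p)
    (hψ : Continuous ψ) (hψs : Continuous ψs)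
    (hequi : ∀ r t : ℝ, 0 < t →
      volume {z : ℝ | ((z, r) : ℝ × ℝ) ∈ halfDisk R ∧ t ≤ ψ (z, r)}
        = volume {z : ℝ | ((z, r) : ℝ × ℝ) ∈ halfDisk R ∧ t ≤ ψs (z, r)}) :
    ∫⁻ x in halfDisk R,
        ENNReal.ofReal ((x.2 ^ 2 + gam) * (max (ψ x - x.2 ^ 2 - gam) 0) ^ p / x.2)
      = ∫⁻ x in halfDisk R,
        ENNReal.ofReal ((x.2 ^ 2 + gam) * (max (ψs x - x.2 ^ 2 - gam) 0) ^ p / x.2) := by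
  rw [fubini_half R _ (meas_cint hp hψ).ennreal_ofReal,
      fubini_half R _ (meas_cint hp hψs).ennreal_ofReal]
  refine lintegral_congr fun r => ?_
  by_cases hr : 0 < r
  · have hstep : ∀ φ : ℝ × ℝ → ℝ, Continuous φ →
        ∫⁻ z in {z : ℝ | (z, r) ∈ halfDisk R},
            ENNReal.ofReal ((((z, r) : ℝ × ℝ).2 ^ 2 + gam)
              * (max (φ (z, r) - ((z, r) : ℝ × ℝ).2 ^ 2 - gam) 0) ^ p / ((z, r) : ℝ × ℝ).2)
          = (∫⁻ z in {z : ℝ | (z, r) ∈ halfDisk R},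
              ENNReal.ofReal ((max (φ (z, r) - (r ^ 2 + gam)) 0) ^ p))
              * ENNReal.ofReal ((r ^ 2 + gam) * r⁻¹) := by
      intro φ hφ
      have hm : Measurable fun z : ℝ =>
          ENNReal.ofReal ((max (φ (z, r) - (r ^ 2 + gam)) 0) ^ p) := by
        have : Continuous fun z : ℝ => (max (φ (z, r) - (r ^ 2 + gam)) 0) ^ p := by
          have hu : Continuous fun z : ℝ => max (φ (z, r) - (r ^ 2 + gam)) 0 :=
            ((hφ.comp (Continuous.prodMk_left r)).sub continuous_const).max continuous_const
          exact continuous_iff_continuousAt.2 fun z =>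
            hu.continuousAt.rpow_const (Or.inr hp.le)
        exact this.measurable.ennreal_ofReal
      rw [← lintegral_mul_const _ hm]
      refine lintegral_congr fun z => ?_
      have h1 : (((z, r) : ℝ × ℝ).2 ^ 2 + gam)
            * (max (φ (z, r) - ((z, r) : ℝ × ℝ).2 ^ 2 - gam) 0) ^ p / ((z, r) : ℝ × ℝ).2
          = (max (φ (z, r) - (r ^ 2 + gam)) 0) ^ p * ((r ^ 2 + gam) * r⁻¹) := by
        show (r ^ 2 + gam) * (max (φ (z, r) - r ^ 2 - gam) 0) ^ p / r = _
        rw [sub_sub]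
        ring
      rw [h1, ENNReal.ofReal_mul (Real.rpow_nonneg (le_max_right _ _) p)]
    rw [hstep ψ hψ, hstep ψs hψs]
    congr 1
    exact slice_key hp (by positivity) _ _
      (hψ.comp (Continuous.prodMk_left r)).measurable
      (hψs.comp (Continuous.prodMk_left r)).measurable
      (measurableSet_slice R r)
      (fun t ht => hequi r t ht)
  · have hempty : {z : ℝ | (z, r) ∈ halfDisk R} = ∅ := by
      ext z; simp only [mem_setOf_eq, mem_empty_iff_false, iff_false]
      intro h; exact hr h.1
    rw [hempty]
    simp

/-- the fundamental pointwise identity -/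
lemma max_rpow_identity {q c s : ℝ} (hq : 1 < q) (hc : 0 < c) :
    (max (s - c) 0) ^ (2 * q - 1) * s
      = (max (s - c) 0) ^ (2 * q) + c * (max (s - c) 0) ^ (2 * q - 1) := by
  rcases le_or_gt s c with h | h
  · rw [max_eq_right (by linarith : s - c ≤ 0)]
    rw [Real.zero_rpow (by intro h'; nlinarith : 2 * q - 1 ≠ 0),
        Real.zero_rpow (by intro h'; nlinarith : 2 * q ≠ 0)]
    ring
  · rw [max_eq_left (by linarith : (0:ℝ) ≤ s - c)]
    have hs : 0 < s - c := by linarith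
    have h2 : (s - c) ^ (2 * q) = (s - c) ^ (2 * q - 1) * (s - c) := by
      calc (s - c) ^ (2 * q) = (s - c) ^ (2 * q - 1 + 1) := by ring_nf
        _ = (s - c) ^ (2 * q - 1) * (s - c) ^ (1 : ℝ) := Real.rpow_add hs _ _
        _ = (s - c) ^ (2 * q - 1) * (s - c) := by rw [Real.rpow_one]
    rw [h2]; ring

/-- equality of the Q-integrals -/
lemma Q_eq (hgam : 0 < gam) (hq : 1 < q)
    (hψ : Continuous ψ) (hψs : Continuous ψs)
    (hequi : ∀ r t : ℝ, 0 < t →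
      volume {z : ℝ | ((z, r) : ℝ × ℝ) ∈ halfDisk R ∧ t ≤ ψ (z, r)}
        = volume {z : ℝ | ((z, r) : ℝ × ℝ) ∈ halfDisk R ∧ t ≤ ψs (z, r)}) :
    ∫ x in halfDisk R, (max (ψ x - x.2 ^ 2 - gam) 0) ^ (2 * q) / x.2
      = ∫ x in halfDisk R, (max (ψs x - x.2 ^ 2 - gam) 0) ^ (2 * q) / x.2 := by
  have hp : (0:ℝ) < 2 * q := by linarith
  have hnn : ∀ φ : ℝ × ℝ → ℝ,
      0 ≤ᵐ[volume.restrict (halfDisk R)]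
        fun x => (max (φ x - x.2 ^ 2 - gam) 0) ^ (2 * q) / x.2 := by
    intro φ
    filter_upwards [ae_restrict_mem (measurableSet_halfDisk R)] with x hx
    exact div_nonneg (Real.rpow_nonneg (le_max_right _ _) _) hx.1.le
  rw [integral_eq_lintegral_of_nonneg_ae (hnn ψ) (meas_qint hp hψ).aestronglyMeasurable,
      integral_eq_lintegral_of_nonneg_ae (hnn ψs) (meas_qint hp hψs).aestronglyMeasurable,
      LQ_eq hgam hp hψ hψs hequi]

/-- equality of the P-integrals -/
lemma P_eq (hgam : 0 < gam) (hq : 1 < q)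
    (hψ : Continuous ψ) (hψs : Continuous ψs)
    (hequi : ∀ r t : ℝ, 0 < t →
      volume {z : ℝ | ((z, r) : ℝ × ℝ) ∈ halfDisk R ∧ t ≤ ψ (z, r)}
        = volume {z : ℝ | ((z, r) : ℝ × ℝ) ∈ halfDisk R ∧ t ≤ ψs (z, r)}) :
    ∫ x in halfDisk R, (max (ψ x - x.2 ^ 2 - gam) 0) ^ (2 * q - 1) * ψ x / x.2
      = ∫ x in halfDisk R, (max (ψs x - x.2 ^ 2 - gam) 0) ^ (2 * q - 1) * ψs x / x.2 := by
  have hp : (0:ℝ) < 2 * q - 1 := by linarith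
  have hp2 : (0:ℝ) < 2 * q := by linarith
  -- rewrite both integrands
  have hrew : ∀ φ : ℝ × ℝ → ℝ, (fun x : ℝ × ℝ => (max (φ x - x.2 ^ 2 - gam) 0) ^ (2 * q - 1) * φ x / x.2)
      = fun x : ℝ × ℝ => ((max (φ x - x.2 ^ 2 - gam) 0) ^ (2 * q)
          + (x.2 ^ 2 + gam) * (max (φ x - x.2 ^ 2 - gam) 0) ^ (2 * q - 1)) / x.2 := by
    intro φ
    funext x
    have hc : (0:ℝ) < x.2 ^ 2 + gam := by positivity
    have := max_rpow_identity (q := q) (c := x.2 ^ 2 + gam) (s := φ x) hq hc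
    rw [sub_sub]
    rw [this]
  have key : ∀ φ : ℝ × ℝ → ℝ, Continuous φ →
      ∫ x in halfDisk R, ((max (φ x - x.2 ^ 2 - gam) 0) ^ (2 * q)
          + (x.2 ^ 2 + gam) * (max (φ x - x.2 ^ 2 - gam) 0) ^ (2 * q - 1)) / x.2
        = ((∫⁻ x in halfDisk R, ENNReal.ofReal ((max (φ x - x.2 ^ 2 - gam) 0) ^ (2 * q) / x.2))
          + ∫⁻ x in halfDisk R, ENNReal.ofReal
              ((x.2 ^ 2 + gam) * (max (φ x - x.2 ^ 2 - gam) 0) ^ (2 * q - 1) / x.2)).toReal := by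
    intro φ hφ
    have hnn : 0 ≤ᵐ[volume.restrict (halfDisk R)]
        fun x : ℝ × ℝ => ((max (φ x - x.2 ^ 2 - gam) 0) ^ (2 * q)
          + (x.2 ^ 2 + gam) * (max (φ x - x.2 ^ 2 - gam) 0) ^ (2 * q - 1)) / x.2 := by
      filter_upwards [ae_restrict_mem (measurableSet_halfDisk R)] with x hx
      refine div_nonneg ?_ hx.1.le
      have h1 : (0:ℝ) ≤ (max (φ x - x.2 ^ 2 - gam) 0) ^ (2*q) :=
        Real.rpow_nonneg (le_max_right _ _) _
      have h2 : (0:ℝ) ≤ (max (φ x - x.2 ^ 2 - gam) 0) ^ (2*q-1) :=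
        Real.rpow_nonneg (le_max_right _ _) _
      positivity
    have hmsum : Measurable fun x : ℝ × ℝ =>
        ((max (φ x - x.2 ^ 2 - gam) 0) ^ (2 * q)
          + (x.2 ^ 2 + gam) * (max (φ x - x.2 ^ 2 - gam) 0) ^ (2 * q - 1)) / x.2 :=
      ((cont_max_rpow hp2 hφ).measurable.add
        (((measurable_snd.pow_const 2).add_const gam).mul
          (cont_max_rpow hp hφ).measurable)).div measurable_snd
    rw [integral_eq_lintegral_of_nonneg_ae hnn hmsum.aestronglyMeasurable]
    congr 1
    have hsplit : ∀ᵐ x ∂(volume.restrict (halfDisk R)),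
        ENNReal.ofReal (((max (φ x - x.2 ^ 2 - gam) 0) ^ (2 * q)
            + (x.2 ^ 2 + gam) * (max (φ x - x.2 ^ 2 - gam) 0) ^ (2 * q - 1)) / x.2)
          = ENNReal.ofReal ((max (φ x - x.2 ^ 2 - gam) 0) ^ (2 * q) / x.2)
            + ENNReal.ofReal ((x.2 ^ 2 + gam) * (max (φ x - x.2 ^ 2 - gam) 0) ^ (2 * q - 1) / x.2) := by
      filter_upwards [ae_restrict_mem (measurableSet_halfDisk R)] with x hx
      rw [add_div, ENNReal.ofReal_add]
      · exact div_nonneg (Real.rpow_nonneg (le_max_right _ _) _) hx.1.le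
      · refine div_nonneg (mul_nonneg (by positivity) (Real.rpow_nonneg (le_max_right _ _) _)) hx.1.le
    rw [lintegral_congr_ae hsplit,
        lintegral_add_left ((meas_qint hp2 hφ).ennreal_ofReal) _]
  calc ∫ x in halfDisk R, (max (ψ x - x.2 ^ 2 - gam) 0) ^ (2 * q - 1) * ψ x / x.2
      = ∫ x in halfDisk R, ((max (ψ x - x.2 ^ 2 - gam) 0) ^ (2 * q)
          + (x.2 ^ 2 + gam) * (max (ψ x - x.2 ^ 2 - gam) 0) ^ (2 * q - 1)) / x.2 := by
        rw [← hrew ψ]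
    _ = _ := key ψ hψ
    _ = ((∫⁻ x in halfDisk R, ENNReal.ofReal ((max (ψs x - x.2 ^ 2 - gam) 0) ^ (2 * q) / x.2))
          + ∫⁻ x in halfDisk R, ENNReal.ofReal
              ((x.2 ^ 2 + gam) * (max (ψs x - x.2 ^ 2 - gam) 0) ^ (2 * q - 1) / x.2)).toReal := by
        rw [LQ_eq hgam hp2 hψ hψs hequi, LC_eq hgam hp hψ hψs hequi]
    _ = ∫ x in halfDisk R, ((max (ψs x - x.2 ^ 2 - gam) 0) ^ (2 * q)
          + (x.2 ^ 2 + gam) * (max (ψs x - x.2 ^ 2 - gam) 0) ^ (2 * q - 1)) / x.2 :=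
        (key ψs hψs).symm
    _ = ∫ x in halfDisk R, (max (ψs x - x.2 ^ 2 - gam) 0) ^ (2 * q - 1) * ψs x / x.2 := by
        rw [← hrew ψs]

/-- numerator of the Nehari integrand -/
def Npt (q c s : ℝ) : ℝ :=
  (1 - 1 / q) * (max (s - c) 0) ^ (2 * q) + c * (max (s - c) 0) ^ (2 * q - 1)

lemma Npt_identity {q c s : ℝ} (hq : 1 < q) (hc : 0 < c) :
    (max (s - c) 0) ^ (2 * q - 1) * s - (1 / q) * (max (s - c) 0) ^ (2 * q) = Npt q c s := by
  rw [max_rpow_identity hq hc, Npt]; ring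

lemma Npt_nonneg {q c s : ℝ} (hq : 1 < q) (hc : 0 < c) : 0 ≤ Npt q c s := by
  have h1 : (0:ℝ) ≤ (max (s - c) 0) ^ (2 * q) := Real.rpow_nonneg (le_max_right _ _) _
  have h2 : (0:ℝ) ≤ (max (s - c) 0) ^ (2 * q - 1) := Real.rpow_nonneg (le_max_right _ _) _
  have h3 : (0:ℝ) < 1 - 1/q := by
    have : 1/q < 1 := by rw [div_lt_one (by linarith)]; linarith
    linarith
  unfold Npt; positivity

lemma Npt_mono {q c s' s : ℝ} (hq : 1 < q) (hc : 0 < c)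
    (hss : max (s' - c) 0 ≤ max (s - c) 0) : Npt q c s' ≤ Npt q c s := by
  have h3 : (0:ℝ) ≤ 1 - 1/q := by
    have : 1/q < 1 := by rw [div_lt_one (by linarith)]; linarith
    linarith
  have h1 : (max (s' - c) 0) ^ (2 * q) ≤ (max (s - c) 0) ^ (2 * q) :=
    Real.rpow_le_rpow (le_max_right _ _) hss (by linarith)
  have h2 : (max (s' - c) 0) ^ (2 * q - 1) ≤ (max (s - c) 0) ^ (2 * q - 1) :=
    Real.rpow_le_rpow (le_max_right _ _) hss (by linarith)
  unfold Npt
  have := mul_le_mul_of_nonneg_left h1 h3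
  have := mul_le_mul_of_nonneg_left h2 hc.le
  linarith

lemma Npt_strict {q c s' s : ℝ} (hq : 1 < q) (hc : 0 < c) (hs : c < s)
    (hss : max (s' - c) 0 < s - c) : Npt q c s' < Npt q c s := by
  have h3 : (0:ℝ) ≤ 1 - 1/q := by
    have : 1/q < 1 := by rw [div_lt_one (by linarith)]; linarith
    linarith
  have hmax : max (s - c) 0 = s - c := max_eq_left (by linarith)
  have h1 : (max (s' - c) 0) ^ (2 * q) ≤ (max (s - c) 0) ^ (2 * q) := by
    rw [hmax]; exact Real.rpow_le_rpow (le_max_right _ _) hss.le (by linarith)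
  have h2 : (max (s' - c) 0) ^ (2 * q - 1) < (max (s - c) 0) ^ (2 * q - 1) := by
    rw [hmax]; exact Real.rpow_lt_rpow (le_max_right _ _) hss (by linarith)
  unfold Npt
  have := mul_le_mul_of_nonneg_left h1 h3
  have := mul_lt_mul_of_pos_left h2 hc
  linarith

lemma max_sub_mono {t c s : ℝ} (ht0 : 0 < t) (ht1 : t < 1) (hc : 0 < c) :
    max (t * s - c) 0 ≤ max (s - c) 0 := by
  rcases le_or_gt s 0 with h | h
  · have : t * s ≤ 0 := mul_nonpos_of_nonneg_of_nonpos ht0.le h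
    rw [max_eq_right (by linarith : t * s - c ≤ 0)]
    exact le_max_right _ _
  · have : t * s ≤ s := by nlinarith
    exact max_le_max (by linarith) le_rfl

lemma max_sub_strict {t c s : ℝ} (ht0 : 0 < t) (ht1 : t < 1) (hc : 0 < c) (hs : c < s) :
    max (t * s - c) 0 < s - c := by
  have hs0 : 0 < s := by linarith
  have : t * s < s := by nlinarith
  exact max_lt (by linarith) (by linarith)

lemma integrable_of_bound {D K : Set (ℝ × ℝ)} {F : ℝ × ℝ → ℝ} {C : ℝ}
    (hDm : MeasurableSet D) (hK : IsCompact K)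
    (hFm : AEStronglyMeasurable F (volume.restrict D))
    (h0 : ∀ x ∈ D, x ∉ K → F x = 0) (hC : ∀ x ∈ D, x ∈ K → ‖F x‖ ≤ C) :
    IntegrableOn F D := by
  have hg : Integrable (K.indicator fun _ => C) (volume.restrict D) :=
    ((integrableOn_const hK.measure_lt_top.ne).integrable_indicator
      hK.measurableSet).restrict
  refine Integrable.mono' hg hFm ?_
  filter_upwards [ae_restrict_mem hDm] with x hx
  by_cases hxK : x ∈ K
  · rw [Set.indicator_of_mem hxK]; exact hC x hx hxK
  · rw [Set.indicator_of_notMem hxK, h0 x hx hxK]; simp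

lemma Hnormsq_smul {D : Set (ℝ × ℝ)} {ψs : ℝ × ℝ → ℝ} (hψd : Differentiable ℝ ψs) (t : ℝ) :
    Hnormsq D (fun x => t * ψs x) = t ^ 2 * Hnormsq D ψs := by
  unfold Hnormsq
  have hgr : ∀ x, gradsq (fun y => t * ψs y) x = t ^ 2 * gradsq ψs x := by
    intro x
    have hd : fderiv ℝ (fun y => t * ψs y) x = t • fderiv ℝ ψs x :=
      fderiv_const_mul (hψd x) t
    unfold gradsq pz2 pr2
    rw [hd]
    simp only [ContinuousLinearMap.coe_smul', Pi.smul_apply, smul_eq_mul]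
    ring
  have : ∫ x in D, gradsq (fun y => t * ψs y) x / x.2
      = ∫ x in D, t ^ 2 * (gradsq ψs x / x.2) := by
    refine integral_congr_ae (Eventually.of_forall fun x => ?_)
    show gradsq (fun y => t * ψs y) x / x.2 = t ^ 2 * (gradsq ψs x / x.2)
    rw [hgr x]; ring
  rw [this, MeasureTheory.integral_const_mul]
  ring

lemma Adm_smul {D : Set (ℝ × ℝ)} {ψs : ℝ × ℝ → ℝ} (hAs : Adm D ψs) (t : ℝ) :
    Adm D (fun x => t * ψs x) := by
  refine ⟨contDiff_const.mul hAs.1, ?_, ?_⟩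
  · have hsub : tsupport (fun x => t * ψs x) ⊆ tsupport ψs :=
      closure_mono (fun x hx => by
        simp only [Function.mem_support] at hx ⊢
        intro h; exact hx (by rw [h, mul_zero]))
    exact IsCompact.of_isClosed_subset hAs.2.1 (isClosed_closure) hsub
  · exact le_trans (closure_mono (fun x hx => by
      simp only [Function.mem_support] at hx ⊢
      intro h; exact hx (by rw [h, mul_zero]))) hAs.2.2

section bounds

variable {R gam p r0 M : ℝ} {K : Set (ℝ × ℝ)} {φ : ℝ × ℝ → ℝ}

lemma qint_zero (hgam : 0 < gam) (hp : 0 < p) {x : ℝ × ℝ} (hφx : φ x = 0) :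
    (max (φ x - x.2 ^ 2 - gam) 0) ^ p / x.2 = 0 := by
  rw [hφx, max_eq_right (by nlinarith [sq_nonneg x.2] : (0:ℝ) - x.2 ^ 2 - gam ≤ 0),
    Real.zero_rpow hp.ne', zero_div]

lemma max_le_M (hgam : 0 < gam) (hM : ∀ y, |φ y| ≤ M) (x : ℝ × ℝ) :
    max (φ x - x.2 ^ 2 - gam) 0 ≤ M := by
  have h1 : φ x ≤ M := le_trans (le_abs_self _) (hM x)
  have hM0 : 0 ≤ M := le_trans (abs_nonneg _) (hM x)
  have := sq_nonneg x.2
  exact max_le (by nlinarith) hM0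

lemma intQ_of_bound (hgam : 0 < gam) (hp : 0 < p) (hφ : Continuous φ)
    (hK : IsCompact K) (hr0 : 0 < r0) (hr0K : ∀ x ∈ K, r0 ≤ x.2)
    (hM : ∀ y, |φ y| ≤ M) (hsupp : ∀ x ∉ K, φ x = 0) :
    IntegrableOn (fun x : ℝ × ℝ => (max (φ x - x.2 ^ 2 - gam) 0) ^ p / x.2) (halfDisk R) := by
  have hM0 : 0 ≤ M := le_trans (abs_nonneg _) (hM (0, 0))
  refine integrable_of_bound (C := M ^ p / r0) (measurableSet_halfDisk R) hK
    (meas_qint hp hφ).aestronglyMeasurable (fun x _ hxK => qint_zero hgam hp (hsupp x hxK))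
    (fun x hxD hxK => ?_)
  have hle : (max (φ x - x.2 ^ 2 - gam) 0) ^ p ≤ M ^ p :=
    Real.rpow_le_rpow (le_max_right _ _) (max_le_M hgam hM x) hp.le
  have hnn : (0:ℝ) ≤ (max (φ x - x.2 ^ 2 - gam) 0) ^ p := Real.rpow_nonneg (le_max_right _ _) _
  rw [Real.norm_eq_abs, abs_of_nonneg (div_nonneg hnn hxD.1.le)]
  exact div_le_div₀ (Real.rpow_nonneg hM0 _) hle hr0 (hr0K x hxK)

lemma intP_of_bound (hgam : 0 < gam) (hp : 0 < p) (hφ : Continuous φ)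
    (hK : IsCompact K) (hr0 : 0 < r0) (hr0K : ∀ x ∈ K, r0 ≤ x.2)
    (hM : ∀ y, |φ y| ≤ M) (hsupp : ∀ x ∉ K, φ x = 0) :
    IntegrableOn (fun x : ℝ × ℝ => (max (φ x - x.2 ^ 2 - gam) 0) ^ p * φ x / x.2)
      (halfDisk R) := by
  have hM0 : 0 ≤ M := le_trans (abs_nonneg _) (hM (0, 0))
  refine integrable_of_bound (C := M ^ p * M / r0) (measurableSet_halfDisk R) hK
    (meas_pint hp hφ).aestronglyMeasurable
    (fun x _ hxK => by rw [hsupp x hxK, mul_zero, zero_div]) (fun x hxD hxK => ?_)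
  have hle : (max (φ x - x.2 ^ 2 - gam) 0) ^ p ≤ M ^ p :=
    Real.rpow_le_rpow (le_max_right _ _) (max_le_M hgam hM x) hp.le
  have hnn : (0:ℝ) ≤ (max (φ x - x.2 ^ 2 - gam) 0) ^ p := Real.rpow_nonneg (le_max_right _ _) _
  rw [Real.norm_eq_abs, abs_div, abs_mul, abs_of_nonneg hnn, abs_of_pos hxD.1]
  refine div_le_div₀ (by positivity) ?_ hr0 (hr0K x hxK)
  exact mul_le_mul hle (hM x) (abs_nonneg _) (Real.rpow_nonneg hM0 _)

/-- continuity of `t ↦ P(t ψs)` -/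
lemma Pfun_cont {q : ℝ} (hgam : 0 < gam) (hq : 1 < q) {ψs : ℝ × ℝ → ℝ} (hψs : Continuous ψs)
    (hK : IsCompact K) (hr0 : 0 < r0) (hr0K : ∀ x ∈ K, r0 ≤ x.2)
    (hM : ∀ y, |ψs y| ≤ M) (hsupp : ∀ x ∉ K, ψs x = 0) :
    Continuous fun t : ℝ => ∫ x in halfDisk R,
      (max (t * ψs x - x.2 ^ 2 - gam) 0) ^ (2 * q - 1) * (t * ψs x) / x.2 := by
  have hp : (0:ℝ) < 2 * q - 1 := by linarith
  have hM0 : 0 ≤ M := le_trans (abs_nonneg _) (hM (0, 0))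
  rw [continuous_iff_continuousAt]
  intro t0
  set T := |t0| + 1 with hT
  have hT0 : 0 < T := by positivity
  apply continuousAt_of_dominated
    (bound := K.indicator fun _ => (T * M) ^ (2 * q - 1) * (T * M) / r0)
  · exact Eventually.of_forall fun t =>
      (meas_pint hp (continuous_const.mul hψs)).aestronglyMeasurable
  · have hball : ∀ᶠ t : ℝ in nhds t0, |t| ≤ T := by
      filter_upwards [Metric.ball_mem_nhds t0 one_pos] with t ht
      rw [Metric.mem_ball, Real.dist_eq] at ht
      have := abs_sub_abs_le_abs_sub t t0
      linarith
    filter_upwards [hball] with t ht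
    filter_upwards [ae_restrict_mem (measurableSet_halfDisk R)] with x hx
    by_cases hxK : x ∈ K
    · rw [Set.indicator_of_mem hxK]
      have hb : |t * ψs x| ≤ T * M := by
        rw [abs_mul]
        exact mul_le_mul ht (hM x) (abs_nonneg _) (le_trans (abs_nonneg _) ht)
      have hle : max (t * ψs x - x.2 ^ 2 - gam) 0 ≤ T * M :=
        max_le_M hgam (M := T * M) (φ := fun y => t * ψs y) (fun y => by
          rw [abs_mul]
          exact mul_le_mul ht (hM y) (abs_nonneg _) (le_trans (abs_nonneg _) ht)) x
      have hle2 : (max (t * ψs x - x.2 ^ 2 - gam) 0) ^ (2*q-1) ≤ (T * M) ^ (2*q-1) :=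
        Real.rpow_le_rpow (le_max_right _ _) hle hp.le
      have hnn : (0:ℝ) ≤ (max (t * ψs x - x.2 ^ 2 - gam) 0) ^ (2*q-1) :=
        Real.rpow_nonneg (le_max_right _ _) _
      rw [Real.norm_eq_abs, abs_div, abs_mul, abs_of_nonneg hnn, abs_of_pos hx.1]
      refine div_le_div₀ (by positivity) ?_ hr0 (hr0K x hxK)
      exact mul_le_mul hle2 hb (abs_nonneg _) (Real.rpow_nonneg (by positivity) _)
    · rw [Set.indicator_of_notMem hxK, hsupp x hxK, mul_zero, mul_zero, zero_div]
      simp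
  · exact ((integrableOn_const hK.measure_lt_top.ne).integrable_indicator
      hK.measurableSet).restrict
  · refine Eventually.of_forall fun x => ?_
    have hc : Continuous fun t : ℝ =>
        (max (t * ψs x - x.2 ^ 2 - gam) 0) ^ (2 * q - 1) * (t * ψs x) / x.2 := by
      have hu : Continuous fun t : ℝ => max (t * ψs x - x.2 ^ 2 - gam) 0 := by
        fun_prop
      have h1 : Continuous fun t : ℝ => (max (t * ψs x - x.2 ^ 2 - gam) 0) ^ (2 * q - 1) :=
        continuous_iff_continuousAt.2 fun t => hu.continuousAt.rpow_const (Or.inr hp.le)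
      exact (h1.mul (by fun_prop : Continuous fun t : ℝ => t * ψs x)).div_const _
    exact hc.continuousAt

end bounds

lemma vanish_of_Hnorm_zero {R : ℝ} {ψs : ℝ × ℝ → ℝ} (hAs : Adm (halfDisk R) ψs)
    {r0 : ℝ} (hr0 : 0 < r0) (hr0K : ∀ x ∈ tsupport ψs, r0 ≤ x.2)
    (h0As : Hnormsq (halfDisk R) ψs = 0) : ∀ x, ψs x = 0 := by
  have hDm := measurableSet_halfDisk R
  have hKc : IsCompact (tsupport ψs) := hAs.2.1
  have hKD : tsupport ψs ⊆ halfDisk R := hAs.2.2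
  have hψs_zero : ∀ x ∉ tsupport ψs, ψs x = 0 := fun x hx => image_eq_zero_of_notMem_tsupport hx
  have hfc : Continuous (fderiv ℝ ψs) := hAs.1.continuous_fderiv (by simp)
  have hg0K : ∀ x ∉ tsupport ψs, fderiv ℝ ψs x = 0 := fun x hx => by
    by_contra h
    exact hx (support_fderiv_subset ℝ (Function.mem_support.2 h))
  have hgradeq : gradsq ψs = fun x => (fderiv ℝ ψs x) (1, 0) ^ 2 + (fderiv ℝ ψs x) (0, 1) ^ 2 :=
    rfl
  have hgradcont : Continuous (gradsq ψs) := by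
    rw [hgradeq]
    exact ((hfc.clm_apply continuous_const).pow 2).add ((hfc.clm_apply continuous_const).pow 2)
  have hgrad0K : ∀ x ∉ tsupport ψs, gradsq ψs x = 0 := fun x hx => by
    simp [gradsq, pz2, pr2, hg0K x hx]
  obtain ⟨C1, hC1⟩ := hKc.exists_bound_of_continuousOn hgradcont.continuousOn
  have hint : IntegrableOn (fun x => gradsq ψs x / x.2) (halfDisk R) := by
    refine integrable_of_bound (C := C1 / r0) hDm hKc
      ((hgradcont.measurable.div measurable_snd).aestronglyMeasurable) ?_ ?_
    · intro x _ hxK; rw [hgrad0K x hxK]; simp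
    · intro x hxD hxK
      have hx2 : r0 ≤ x.2 := hr0K x hxK
      have hg : 0 ≤ gradsq ψs x := by rw [hgradeq]; positivity
      have hb : gradsq ψs x ≤ C1 := by
        have := hC1 x hxK; rwa [Real.norm_eq_abs, abs_of_nonneg hg] at this
      rw [Real.norm_eq_abs, abs_of_nonneg (div_nonneg hg (hxD.1.le))]
      exact div_le_div₀ (le_trans hg hb) hb hr0 hx2
  have hgrad_int : ∫ x in halfDisk R, gradsq ψs x / x.2 = 0 := by
    have h2 : (2 : ℝ) * π ^ 2 ≠ 0 := by positivity
    have := h0As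
    unfold Hnormsq at this
    exact (mul_eq_zero.1 this).resolve_left h2
  have hnn : 0 ≤ᵐ[volume.restrict (halfDisk R)] fun x : ℝ × ℝ => gradsq ψs x / x.2 := by
    filter_upwards [ae_restrict_mem hDm] with x hx
    refine div_nonneg ?_ hx.1.le
    rw [hgradeq]; positivity
  have hae := (setIntegral_eq_zero_iff_of_nonneg_ae hnn hint).1 hgrad_int
  have hgr0 : ∀ x, gradsq ψs x = 0 := by
    by_contra h
    push_neg at h
    obtain ⟨x1, hx1⟩ := h
    have hUopen : IsOpen {x | gradsq ψs x ≠ 0} := by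
      have : {x | gradsq ψs x ≠ 0} = gradsq ψs ⁻¹' ({0}ᶜ) := rfl
      rw [this]
      exact hgradcont.isOpen_preimage _ isOpen_compl_singleton
    have hU0 : volume {x | gradsq ψs x ≠ 0} = 0 := by
      have h2 : (volume.restrict (halfDisk R)) {x | ¬ (gradsq ψs x / x.2 = 0)} = 0 := by
        have := ae_iff.1 hae
        simpa using this
      rw [Measure.restrict_apply' hDm] at h2
      have hsub : {x | gradsq ψs x ≠ 0} ⊆ {x | ¬ (gradsq ψs x / x.2 = 0)} ∩ halfDisk R := by
        intro x hx
        have hxD : x ∈ halfDisk R := by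
          by_contra hxD
          exact hx (hgrad0K x (fun hmem => hxD (hKD hmem)))
        refine ⟨fun hdiv => ?_, hxD⟩
        rcases div_eq_zero_iff.1 hdiv with h | h
        · exact hx h
        · exact hxD.1.ne' h
      exact measure_mono_null hsub h2
    exact absurd hU0 (hUopen.measure_pos volume ⟨x1, hx1⟩).ne'
  have hfz : ∀ x, fderiv ℝ ψs x = 0 := by
    intro x
    have h1 : pz2 ψs x = 0 := by
      have := hgr0 x
      unfold gradsq at this
      nlinarith [sq_nonneg (pz2 ψs x), sq_nonneg (pr2 ψs x)]
    have h2 : pr2 ψs x = 0 := by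
      have := hgr0 x
      unfold gradsq at this
      nlinarith [sq_nonneg (pz2 ψs x), sq_nonneg (pr2 ψs x)]
    refine ContinuousLinearMap.ext fun v => ?_
    have hv : v = v.1 • ((1:ℝ), (0:ℝ)) + v.2 • ((0:ℝ), (1:ℝ)) := by
      apply Prod.ext <;> simp
    rw [hv, map_add, (fderiv ℝ ψs x).map_smul, (fderiv ℝ ψs x).map_smul]
    have e1 : fderiv ℝ ψs x (1, 0) = 0 := h1
    have e2 : fderiv ℝ ψs x (0, 1) = 0 := h2
    rw [e1, e2]
    simp
  intro x
  rw [is_const_of_fderiv_eq_zero (hAs.1.differentiable (by simp)) hfz x (0, 0)]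
  refine hψs_zero (0, 0) fun hmem => ?_
  exact lt_irrefl (0:ℝ) (hKD hmem).1

end StmtAux

set_option maxHeartbeats 1000000 in
/-- If `ψ` minimizes `I` over the Nehari manifold `N`, then its Steiner symmetrization
`ψ*` in the `z`-variable (even in `z`, nonincreasing in `|z|`, equimeasurable with `ψ`,
with `‖ψ*‖_H ≤ ‖ψ‖_H`) also belongs to `N` and `I[ψ*] = I[ψ]`. -/
theorem stmt14 (R q lam gam : ℝ) (hR : 0 < R) (hq : 1 < q) (hlam : 0 < lam)
    (hgam : 0 < gam) (ψ ψs : ℝ × ℝ → ℝ)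
    (hAψ : Adm (halfDisk R) ψ) (hne : Hnormsq (halfDisk R) ψ ≠ 0)
    (hNψ : IprimeSelf (halfDisk R) q lam gam ψ = 0)
    (hmin : ∀ φ : ℝ × ℝ → ℝ, Adm (halfDisk R) φ → Hnormsq (halfDisk R) φ ≠ 0 →
      IprimeSelf (halfDisk R) q lam gam φ = 0 →
      Ifun (halfDisk R) q lam gam ψ ≤ Ifun (halfDisk R) q lam gam φ)
    (hAs : Adm (halfDisk R) ψs)
    (hsym : ∀ z r : ℝ, ψs (z, r) = ψs (-z, r))
    (hmono : ∀ r z z' : ℝ, 0 ≤ z → z ≤ z' → ψs (z', r) ≤ ψs (z, r))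
    (hequi : ∀ r t : ℝ, 0 < t →
      volume {z : ℝ | ((z, r) : ℝ × ℝ) ∈ halfDisk R ∧ t ≤ ψ (z, r)}
        = volume {z : ℝ | ((z, r) : ℝ × ℝ) ∈ halfDisk R ∧ t ≤ ψs (z, r)})
    (hnorm : Hnormsq (halfDisk R) ψs ≤ Hnormsq (halfDisk R) ψ) :
    Hnormsq (halfDisk R) ψs ≠ 0 ∧ IprimeSelf (halfDisk R) q lam gam ψs = 0 ∧
      Ifun (halfDisk R) q lam gam ψs = Ifun (halfDisk R) q lam gam ψ := by
  have hDm := measurableSet_halfDisk R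
  have hψc : Continuous ψ := hAψ.1.continuous
  have hψsc : Continuous ψs := hAs.1.continuous
  have hp1 : (0:ℝ) < 2 * q - 1 := by linarith
  have hp2 : (0:ℝ) < 2 * q := by linarith
  have hkpos : (0:ℝ) < π ^ 2 * lam := by positivity
  -- the P and Q integral equalities
  have hPeq := P_eq hgam hq hψc hψsc hequi
  have hQeq := Q_eq hgam hq hψc hψsc hequi
  -- nonnegativity of the H-norms
  have hHnn : ∀ φ : ℝ × ℝ → ℝ, 0 ≤ Hnormsq (halfDisk R) φ := by
    intro φ
    have h1 : 0 ≤ ∫ x in halfDisk R, gradsq φ x / x.2 :=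
      setIntegral_nonneg hDm fun x hx => div_nonneg (by unfold gradsq; positivity) hx.1.le
    have h2 : (0:ℝ) ≤ 2 * π ^ 2 := by positivity
    exact mul_nonneg h2 h1
  have hApos : 0 < Hnormsq (halfDisk R) ψ := (hHnn ψ).lt_of_ne' hne
  -- Nehari identity for ψ
  have hAP : Hnormsq (halfDisk R) ψ = 2 * π ^ 2 * lam *
      ∫ x in halfDisk R, (max (ψ x - x.2 ^ 2 - gam) 0) ^ (2 * q - 1) * ψ x / x.2 := by
    have h := hNψ
    unfold IprimeSelf at h
    linarith
  have hPψpos : 0 < ∫ x in halfDisk R,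
      (max (ψ x - x.2 ^ 2 - gam) 0) ^ (2 * q - 1) * ψ x / x.2 := by nlinarith
  have hPψspos : 0 < ∫ x in halfDisk R,
      (max (ψs x - x.2 ^ 2 - gam) 0) ^ (2 * q - 1) * ψs x / x.2 := by
    rw [← hPeq]; exact hPψpos
  -- support facts for ψs
  have hKc : IsCompact (tsupport ψs) := hAs.2.1
  have hKD : tsupport ψs ⊆ halfDisk R := hAs.2.2
  have hψs_zero : ∀ x ∉ tsupport ψs, ψs x = 0 := fun x hx => image_eq_zero_of_notMem_tsupport hx
  have hKne : (tsupport ψs).Nonempty := by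
    rcases eq_empty_or_nonempty (tsupport ψs) with h | h
    · exfalso
      have hzero : ∀ x, ψs x = 0 := fun x => hψs_zero x (by rw [h]; exact notMem_empty x)
      have h0 : ∫ x in halfDisk R,
          (max (ψs x - x.2 ^ 2 - gam) 0) ^ (2 * q - 1) * ψs x / x.2 = 0 := by
        simp only [hzero, mul_zero, zero_div, integral_zero]
      linarith
    · exact h
  obtain ⟨x0, hx0K, hx0min'⟩ := hKc.exists_isMinOn hKne continuous_snd.continuousOn
  have hx0min : ∀ x ∈ tsupport ψs, x0.2 ≤ x.2 := fun x hx => hx0min' hx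
  have hr0 : 0 < x0.2 := (hKD hx0K).1
  obtain ⟨C0, hC0⟩ := hKc.exists_bound_of_continuousOn hψsc.continuousOn
  have hM : ∀ x, |ψs x| ≤ max C0 0 := by
    intro x
    by_cases hx : x ∈ tsupport ψs
    · exact le_trans (hC0 x hx) (le_max_left _ _)
    · rw [hψs_zero x hx]; simp
  have hM0 : (0:ℝ) ≤ max C0 0 := le_max_right _ _
  -- ψs has nonzero norm
  have hAsne : Hnormsq (halfDisk R) ψs ≠ 0 := by
    intro h0As
    have hzero := vanish_of_Hnorm_zero hAs hr0 (fun x hx => hx0min x hx) h0As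
    have h0 : ∫ x in halfDisk R,
        (max (ψs x - x.2 ^ 2 - gam) 0) ^ (2 * q - 1) * ψs x / x.2 = 0 := by
      simp only [hzero, mul_zero, zero_div, integral_zero]
    linarith
  have hAspos : 0 < Hnormsq (halfDisk R) ψs := (hHnn ψs).lt_of_ne' hAsne
  -- pointwise identity relating P and Q integrands to Npt
  have hpw : ∀ (s : ℝ) (x : ℝ × ℝ),
      (max (s - x.2 ^ 2 - gam) 0) ^ (2 * q - 1) * s / x.2
          - (1 / q) * ((max (s - x.2 ^ 2 - gam) 0) ^ (2 * q) / x.2)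
        = Npt q (x.2 ^ 2 + gam) s / x.2 := by
    intro s x
    have hc : (0:ℝ) < x.2 ^ 2 + gam := by positivity
    rw [show s - x.2 ^ 2 - gam = s - (x.2 ^ 2 + gam) from by ring]
    rw [← Npt_identity hq hc]
    ring
  -- the set where ψs exceeds the obstacle has positive measure
  have hE : 0 < volume {x : ℝ × ℝ | x ∈ halfDisk R ∧ x.2 ^ 2 + gam < ψs x} := by
    by_contra h
    push_neg at h
    have hE0 : volume {x : ℝ × ℝ | x ∈ halfDisk R ∧ x.2 ^ 2 + gam < ψs x} = 0 :=
      by simpa using h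
    have hae : ∀ᵐ x ∂volume, x ∉ {x : ℝ × ℝ | x ∈ halfDisk R ∧ x.2 ^ 2 + gam < ψs x} :=
      measure_eq_zero_iff_ae_notMem.1 hE0
    have h0 : ∫ x in halfDisk R,
        (max (ψs x - x.2 ^ 2 - gam) 0) ^ (2 * q - 1) * ψs x / x.2 = 0 := by
      have hcongr : ∀ᵐ x ∂(volume.restrict (halfDisk R)),
          (max (ψs x - x.2 ^ 2 - gam) 0) ^ (2 * q - 1) * ψs x / x.2 = 0 := by
        filter_upwards [ae_restrict_of_ae hae, ae_restrict_mem hDm] with x hxE hxD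
        have hle : ψs x ≤ x.2 ^ 2 + gam := not_lt.1 fun hlt => hxE ⟨hxD, hlt⟩
        rw [max_eq_right (by linarith), Real.zero_rpow hp1.ne', zero_mul, zero_div]
      rw [integral_congr_ae hcongr, integral_zero]
    linarith
  -- main equality of norms
  have hAs_eq : Hnormsq (halfDisk R) ψs = Hnormsq (halfDisk R) ψ := by
    by_contra hneq
    have hlt : Hnormsq (halfDisk R) ψs < Hnormsq (halfDisk R) ψ := lt_of_le_of_ne hnorm hneq
    -- small parameter
    have hM1 : (0:ℝ) < max C0 0 + 1 := by positivity
    have hε0 : 0 < min (gam / (max C0 0 + 1)) 1 := lt_min (by positivity) one_pos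
    have hε1 : min (gam / (max C0 0 + 1)) 1 ≤ 1 := min_le_right _ _
    have hgcont : Continuous fun t : ℝ => t ^ 2 * Hnormsq (halfDisk R) ψs
        - 2 * π ^ 2 * lam * ∫ x in halfDisk R,
            (max (t * ψs x - x.2 ^ 2 - gam) 0) ^ (2 * q - 1) * (t * ψs x) / x.2 := by
      refine Continuous.sub ?_ (continuous_const.mul
        (Pfun_cont hgam hq hψsc hKc hr0 (fun x hx => hx0min x hx) hM hψs_zero))
      exact (continuous_pow 2).mul continuous_const
    -- value at ε
    have hPε : ∫ x in halfDisk R,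
        (max ((min (gam / (max C0 0 + 1)) 1) * ψs x - x.2 ^ 2 - gam) 0) ^ (2 * q - 1)
          * ((min (gam / (max C0 0 + 1)) 1) * ψs x) / x.2 = 0 := by
      have hzero : ∀ x : ℝ × ℝ,
          max ((min (gam / (max C0 0 + 1)) 1) * ψs x - x.2 ^ 2 - gam) 0 = 0 := by
        intro x
        refine max_eq_right ?_
        have hεle : min (gam / (max C0 0 + 1)) 1 ≤ gam / (max C0 0 + 1) := min_le_left _ _
        have hsq := sq_nonneg x.2
        rcases le_or_gt (ψs x) 0 with hψx | hψx
        · have : (min (gam / (max C0 0 + 1)) 1) * ψs x ≤ 0 :=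
            mul_nonpos_of_nonneg_of_nonpos hε0.le hψx
          nlinarith
        · have h1 : (min (gam / (max C0 0 + 1)) 1) * ψs x
              ≤ (gam / (max C0 0 + 1)) * (max C0 0 + 1) := by
            refine mul_le_mul hεle ?_ hψx.le (by positivity)
            have := hM x
            have := le_abs_self (ψs x)
            linarith
          rw [div_mul_cancel₀ _ hM1.ne'] at h1
          linarith
      simp only [hzero, Real.zero_rpow hp1.ne', zero_mul, zero_div, integral_zero]
    -- IVT
    have hg1val : (1:ℝ) ^ 2 * Hnormsq (halfDisk R) ψs
        - 2 * π ^ 2 * lam * ∫ x in halfDisk R,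
            (max ((1:ℝ) * ψs x - x.2 ^ 2 - gam) 0) ^ (2 * q - 1) * ((1:ℝ) * ψs x) / x.2
        < 0 := by
      simp only [one_mul, one_pow]
      rw [hPeq] at hAP
      linarith only [hAP, hlt]
    have hgεval : 0 ≤ (min (gam / (max C0 0 + 1)) 1) ^ 2 * Hnormsq (halfDisk R) ψs
        - 2 * π ^ 2 * lam * ∫ x in halfDisk R,
            (max ((min (gam / (max C0 0 + 1)) 1) * ψs x - x.2 ^ 2 - gam) 0) ^ (2 * q - 1)
              * ((min (gam / (max C0 0 + 1)) 1) * ψs x) / x.2 := by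
      rw [hPε]
      have : (0:ℝ) < (min (gam / (max C0 0 + 1)) 1) ^ 2 * Hnormsq (halfDisk R) ψs :=
        mul_pos (pow_pos hε0 2) hAspos
      linarith
    have hIVT := intermediate_value_Icc' hε1 hgcont.continuousOn
    have h0mem : (0:ℝ) ∈ Icc
        ((1:ℝ) ^ 2 * Hnormsq (halfDisk R) ψs
          - 2 * π ^ 2 * lam * ∫ x in halfDisk R,
            (max ((1:ℝ) * ψs x - x.2 ^ 2 - gam) 0) ^ (2 * q - 1) * ((1:ℝ) * ψs x) / x.2)
        ((min (gam / (max C0 0 + 1)) 1) ^ 2 * Hnormsq (halfDisk R) ψs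
          - 2 * π ^ 2 * lam * ∫ x in halfDisk R,
            (max ((min (gam / (max C0 0 + 1)) 1) * ψs x - x.2 ^ 2 - gam) 0) ^ (2 * q - 1)
              * ((min (gam / (max C0 0 + 1)) 1) * ψs x) / x.2) :=
      ⟨hg1val.le, hgεval⟩
    obtain ⟨t, htI, hgt⟩ := hIVT h0mem
    beta_reduce at hgt
    have ht0 : 0 < t := lt_of_lt_of_le hε0 htI.1
    have ht1 : t < 1 := by
      rcases lt_or_eq_of_le htI.2 with h | h
      · exact h
      · exfalso; rw [h] at hgt; rw [hgt] at hg1val; simp at hg1val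
    -- t ψs is on the Nehari manifold
    have hHt : Hnormsq (halfDisk R) (fun x => t * ψs x)
        = t ^ 2 * Hnormsq (halfDisk R) ψs :=
      Hnormsq_smul (hAs.1.differentiable (by simp)) t
    have hIpt : IprimeSelf (halfDisk R) q lam gam (fun x => t * ψs x) = 0 := by
      show Hnormsq (halfDisk R) (fun x => t * ψs x) - 2 * π ^ 2 * lam *
          ∫ x in halfDisk R,
            (max (t * ψs x - x.2 ^ 2 - gam) 0) ^ (2 * q - 1) * (t * ψs x) / x.2 = 0
      rw [hHt]
      linarith only [hgt]
    have hHtne : Hnormsq (halfDisk R) (fun x => t * ψs x) ≠ 0 := by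
      rw [hHt]
      exact (mul_pos (pow_pos ht0 2) hAspos).ne'
    have hmin_le := hmin (fun x => t * ψs x) (Adm_smul hAs t) hHtne hIpt
    -- integrability facts
    have hMt : ∀ y, |t * ψs y| ≤ max C0 0 := by
      intro y
      rw [abs_mul, abs_of_pos ht0]
      calc t * |ψs y| ≤ 1 * |ψs y| := mul_le_mul_of_nonneg_right ht1.le (abs_nonneg _)
        _ = |ψs y| := one_mul _
        _ ≤ max C0 0 := hM y
    have hsuppt : ∀ x ∉ tsupport ψs, t * ψs x = 0 := fun x hx => by
      rw [hψs_zero x hx, mul_zero]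
    have hintPψs := intP_of_bound (R := R) hgam hp1 hψsc hKc hr0
      (fun x hx => hx0min x hx) hM hψs_zero
    have hintQψs := intQ_of_bound (R := R) hgam hp2 hψsc hKc hr0
      (fun x hx => hx0min x hx) hM hψs_zero
    have hintPt := intP_of_bound (R := R) (φ := fun x => t * ψs x) hgam hp1 (continuous_const.mul hψsc) hKc hr0
      (fun x hx => hx0min x hx) hMt hsuppt
    have hintQt := intQ_of_bound (R := R) (φ := fun x => t * ψs x) hgam hp2 (continuous_const.mul hψsc) hKc hr0
      (fun x hx => hx0min x hx) hMt hsuppt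
    -- Npt integrals
    have hN1int : IntegrableOn (fun x : ℝ × ℝ => Npt q (x.2 ^ 2 + gam) (ψs x) / x.2)
        (halfDisk R) := by
      have heq : (fun x : ℝ × ℝ => Npt q (x.2 ^ 2 + gam) (ψs x) / x.2)
          = fun x => (max (ψs x - x.2 ^ 2 - gam) 0) ^ (2 * q - 1) * ψs x / x.2
            - (1 / q) * ((max (ψs x - x.2 ^ 2 - gam) 0) ^ (2 * q) / x.2) :=
        funext fun x => (hpw (ψs x) x).symm
      rw [heq]
      exact hintPψs.sub (hintQψs.const_mul (1 / q))
    have hNtint : IntegrableOn (fun x : ℝ × ℝ => Npt q (x.2 ^ 2 + gam) (t * ψs x) / x.2)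
        (halfDisk R) := by
      have heq : (fun x : ℝ × ℝ => Npt q (x.2 ^ 2 + gam) (t * ψs x) / x.2)
          = fun x => (max (t * ψs x - x.2 ^ 2 - gam) 0) ^ (2 * q - 1) * (t * ψs x) / x.2
            - (1 / q) * ((max (t * ψs x - x.2 ^ 2 - gam) 0) ^ (2 * q) / x.2) :=
        funext fun x => (hpw (t * ψs x) x).symm
      rw [heq]
      exact hintPt.sub (hintQt.const_mul (1 / q))
    -- positivity of difference
    have hdiffpos : 0 < ∫ x in halfDisk R,
        (Npt q (x.2 ^ 2 + gam) (ψs x) - Npt q (x.2 ^ 2 + gam) (t * ψs x)) / x.2 := by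
      have hnn : 0 ≤ᵐ[volume.restrict (halfDisk R)] fun x : ℝ × ℝ =>
          (Npt q (x.2 ^ 2 + gam) (ψs x) - Npt q (x.2 ^ 2 + gam) (t * ψs x)) / x.2 := by
        filter_upwards [ae_restrict_mem hDm] with x hx
        have hc : (0:ℝ) < x.2 ^ 2 + gam := by positivity
        have h := Npt_mono (s' := t * ψs x) (s := ψs x) hq hc (max_sub_mono ht0 ht1 hc)
        exact div_nonneg (by linarith only [h]) hx.1.le
      have hintd : IntegrableOn (fun x : ℝ × ℝ =>
          (Npt q (x.2 ^ 2 + gam) (ψs x) - Npt q (x.2 ^ 2 + gam) (t * ψs x)) / x.2)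
          (halfDisk R) := by
        have heq : (fun x : ℝ × ℝ =>
            (Npt q (x.2 ^ 2 + gam) (ψs x) - Npt q (x.2 ^ 2 + gam) (t * ψs x)) / x.2)
            = fun x => Npt q (x.2 ^ 2 + gam) (ψs x) / x.2
              - Npt q (x.2 ^ 2 + gam) (t * ψs x) / x.2 :=
          funext fun x => sub_div _ _ _
        rw [heq]
        exact hN1int.sub hNtint
      refine (integral_pos_iff_support_of_nonneg_ae hnn hintd).2 ?_
      rw [Measure.restrict_apply' hDm]
      refine lt_of_lt_of_le hE (measure_mono ?_)
      rintro x ⟨hxD, hxlt⟩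
      have hc : (0:ℝ) < x.2 ^ 2 + gam := by positivity
      have hstrict := Npt_strict (s' := t * ψs x) (s := ψs x) hq hc hxlt
        (max_sub_strict ht0 ht1 hc hxlt)
      refine ⟨?_, hxD⟩
      have : 0 < (Npt q (x.2 ^ 2 + gam) (ψs x) - Npt q (x.2 ^ 2 + gam) (t * ψs x)) / x.2 :=
        div_pos (by linarith) hxD.1
      exact Function.mem_support.2 this.ne'
    -- turn into integral identities
    have h5 : ∫ x in halfDisk R, Npt q (x.2 ^ 2 + gam) (ψs x) / x.2
        = (∫ x in halfDisk R, (max (ψs x - x.2 ^ 2 - gam) 0) ^ (2 * q - 1) * ψs x / x.2)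
          - (1 / q) * ∫ x in halfDisk R, (max (ψs x - x.2 ^ 2 - gam) 0) ^ (2 * q) / x.2 := by
      rw [← MeasureTheory.integral_const_mul,
        ← integral_sub hintPψs (hintQψs.const_mul (1 / q))]
      exact integral_congr_ae (Eventually.of_forall fun x => (hpw (ψs x) x).symm)
    have h6 : ∫ x in halfDisk R, Npt q (x.2 ^ 2 + gam) (t * ψs x) / x.2
        = (∫ x in halfDisk R,
            (max (t * ψs x - x.2 ^ 2 - gam) 0) ^ (2 * q - 1) * (t * ψs x) / x.2)
          - (1 / q) * ∫ x in halfDisk R,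
            (max (t * ψs x - x.2 ^ 2 - gam) 0) ^ (2 * q) / x.2 := by
      rw [← MeasureTheory.integral_const_mul,
        ← integral_sub hintPt (hintQt.const_mul (1 / q))]
      exact integral_congr_ae (Eventually.of_forall fun x => (hpw (t * ψs x) x).symm)
    have h7 : ∫ x in halfDisk R,
        (Npt q (x.2 ^ 2 + gam) (ψs x) - Npt q (x.2 ^ 2 + gam) (t * ψs x)) / x.2
        = (∫ x in halfDisk R, Npt q (x.2 ^ 2 + gam) (ψs x) / x.2)
          - ∫ x in halfDisk R, Npt q (x.2 ^ 2 + gam) (t * ψs x) / x.2 := by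
      rw [← integral_sub hN1int hNtint]
      exact integral_congr_ae (Eventually.of_forall fun x => sub_div _ _ _)
    -- Ifun values
    have e1 : Ifun (halfDisk R) q lam gam (fun x => t * ψs x)
        = t ^ 2 * Hnormsq (halfDisk R) ψs / 2 - (π ^ 2 * lam / q) *
          ∫ x in halfDisk R, (max (t * ψs x - x.2 ^ 2 - gam) 0) ^ (2 * q) / x.2 := by
      show Hnormsq (halfDisk R) (fun x => t * ψs x) / 2 - (π ^ 2 * lam / q) *
          (∫ x in halfDisk R, (max (t * ψs x - x.2 ^ 2 - gam) 0) ^ (2 * q) / x.2) = _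
      rw [hHt]
    have e2 : Ifun (halfDisk R) q lam gam ψ
        = Hnormsq (halfDisk R) ψ / 2 - (π ^ 2 * lam / q) *
          ∫ x in halfDisk R, (max (ψ x - x.2 ^ 2 - gam) 0) ^ (2 * q) / x.2 := rfl
    -- final strict inequality
    have hgap : (∫ x in halfDisk R,
          (max (t * ψs x - x.2 ^ 2 - gam) 0) ^ (2 * q - 1) * (t * ψs x) / x.2)
          - (1 / q) * (∫ x in halfDisk R,
            (max (t * ψs x - x.2 ^ 2 - gam) 0) ^ (2 * q) / x.2)
        < (∫ x in halfDisk R, (max (ψs x - x.2 ^ 2 - gam) 0) ^ (2 * q - 1) * ψs x / x.2)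
          - (1 / q) * ∫ x in halfDisk R, (max (ψs x - x.2 ^ 2 - gam) 0) ^ (2 * q) / x.2 := by
      rw [h7, h5, h6] at hdiffpos
      linarith only [hdiffpos]
    have hmul := mul_lt_mul_of_pos_left hgap hkpos
    rw [hQeq] at e2
    rw [hPeq] at hAP
    -- contradiction
    have hfinal : Ifun (halfDisk R) q lam gam (fun x => t * ψs x)
        < Ifun (halfDisk R) q lam gam ψ := by
      rw [e1, e2]
      have hq0 : q ≠ 0 := ne_of_gt (by linarith : (0:ℝ) < q)
      have expand : ∀ a b : ℝ, (π ^ 2 * lam) * (a - (1/q) * b)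
          = (π ^ 2 * lam) * a - (π ^ 2 * lam / q) * b := by
        intro a b; field_simp
      rw [expand, expand] at hmul
      -- hgt : t^2 * As - 2π²lam * Pt = 0, hAP : A = 2π²lam Pψs
      linarith only [hmul, hgt, hAP]
    linarith only [hmin_le, hfinal]
  -- conclusions
  refine ⟨hAsne, ?_, ?_⟩
  · show Hnormsq (halfDisk R) ψs - 2 * π ^ 2 * lam *
        (∫ x in halfDisk R, (max (ψs x - x.2 ^ 2 - gam) 0) ^ (2 * q - 1) * ψs x / x.2) = 0
    rw [← hPeq, hAs_eq]
    have h := hNψ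
    unfold IprimeSelf at h
    linarith
  · show Hnormsq (halfDisk R) ψs / 2 - (π ^ 2 * lam / q) *
        (∫ x in halfDisk R, (max (ψs x - x.2 ^ 2 - gam) 0) ^ (2 * q) / x.2)
      = Hnormsq (halfDisk R) ψ / 2 - (π ^ 2 * lam / q) *
        (∫ x in halfDisk R, (max (ψ x - x.2 ^ 2 - gam) 0) ^ (2 * q) / x.2)
    rw [← hQeq, hAs_eq]


end
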